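/- Let t = △uvw and t' = △uvw' be two triangles in ℝ² sharing the edge uv, with disjoint interiors, all side lengths at least M, and all angles between α and β (0 < α, β < π). Setting b = cos²(β/2)·sin(α/2)/2, the distance from the set {u, v} to the segment joining the incentres c(t) and c(t') is at least bM. -/

import Mathlib

open EuclideanGeometry Real Metric

/-- The incentre of the triangle with vertices `u, v, w`, given in barycentric form with
weights the opposite side lengths. -/
noncomputable def incentre (u v w : EuclideanSpace ℝ (Fin 2)) : EuclideanSpace ℝ (Fin 2) :=
  (dist v w + dist u w + dist u v)⁻¹ •
    (dist v w • u + dist u w • v + dist u v • w)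

open scoped RealInnerProductSpace

lemma incentre_comm (u v w : EuclideanSpace ℝ (Fin 2)) : incentre u v w = incentre v u w := by
  simp only [incentre, dist_comm v u, dist_comm w u, dist_comm w v]
  match_scalars <;> ring

lemma incentre_sub (u v w : EuclideanSpace ℝ (Fin 2))
    (hS : dist v w + dist u w + dist u v ≠ 0) :
    incentre u v w - u = (dist v w + dist u w + dist u v)⁻¹ •
      (dist u w • (v - u) + dist u v • (w - u)) := by
  rw [incentre]
  match_scalars <;> field_simp <;> ring

lemma key (α β M : ℝ) (u v w : EuclideanSpace ℝ (Fin 2))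
    (hα : 0 < α) (hαπ : α < π) (hβ : β < π) (hβ0 : 0 < β) (hM : 0 < M)
    (hs₁ : M ≤ dist u v) (hs₂ : M ≤ dist u w) (hs₃ : M ≤ dist v w)
    (ha' : angle v u w ≤ β) :
    (cos (β / 2) ^ 2 * sin (α / 2) / 2) * M * dist u v ≤
      (inner ℝ (incentre u v w - u) (v - u) : ℝ) := by
  set a := dist v w with hadef
  set b := dist u w with hbdef
  set c := dist u v with hcdef
  have ha0 : 0 < a := lt_of_lt_of_le hM hs₃
  have hb0 : 0 < b := lt_of_lt_of_le hM hs₂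
  have hc0 : 0 < c := lt_of_lt_of_le hM hs₁
  have hS : 0 < a + b + c := by linarith
  rw [incentre_sub u v w hS.ne', real_inner_smul_left, inner_add_left,
    real_inner_smul_left, real_inner_smul_left]
  have h1 : (inner ℝ (v - u) (v - u) : ℝ) = c ^ 2 := by
    rw [real_inner_self_eq_norm_sq]
    congr 1
    rw [hcdef, dist_eq_norm, ← norm_neg]
    congr 1; abel
  have h2 : (inner ℝ (w - u) (v - u) : ℝ) = cos (angle v u w) * (c * b) := by
    rw [real_inner_comm]
    have hthis := InnerProductGeometry.cos_angle_mul_norm_mul_norm (v - u) (w - u)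
    have hnv : ‖v - u‖ = c := by rw [hcdef, dist_comm, dist_eq_norm]
    have hnw : ‖w - u‖ = b := by rw [hbdef, dist_comm, dist_eq_norm]
    rw [EuclideanGeometry.angle, vsub_eq_sub, vsub_eq_sub, ← hthis, hnv, hnw]
  rw [h1, h2]
  -- goal : target * M * c ≤ (a+b+c)⁻¹ * (b * c^2 + c * (cos A * (c * b)))
  have hcos : cos β ≤ cos (angle v u w) :=
    Real.cos_le_cos_of_nonneg_of_le_pi (EuclideanGeometry.angle_nonneg _ _ _) hβ.le ha'
  have hcosβ : cos β = 2 * cos (β / 2) ^ 2 - 1 := by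
    have := Real.cos_sq (β / 2)
    have h2 : 2 * (β / 2) = β := by ring
    rw [h2] at this
    linarith
  have hsin1 : sin (α / 2) ≤ 1 := Real.sin_le_one _
  have hsin0 : 0 ≤ sin (α / 2) := Real.sin_nonneg_of_nonneg_of_le_pi (by linarith) (by linarith [Real.pi_pos])
  have hcb0 : 0 ≤ cos (β / 2) ^ 2 := sq_nonneg _
  have htri : a ≤ b + c := by
    rw [hadef, hbdef, hcdef, dist_comm u v]
    calc dist v w ≤ dist v u + dist u w := dist_triangle _ _ _
    _ = dist u w + dist v u := by ring
  -- key chain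
  have hE : (a + b + c)⁻¹ * (b * c ^ 2 + c * (cos (angle v u w) * (c * b)))
      = b * c ^ 2 * (1 + cos (angle v u w)) / (a + b + c) := by
    field_simp
  rw [hE]
  have hone : 1 + cos (angle v u w) ≥ 2 * cos (β / 2) ^ 2 := by
    rw [hcosβ] at hcos; linarith
  rw [le_div_iff₀ hS]
  have hMb : M * c ≤ b * c := by nlinarith
  have hMc : M * b ≤ b * c := by nlinarith
  -- target*M*c*(a+b+c) ≤ b*c^2*(1+cosA)
  -- since a+b+c ≤ 2(b+c), and M*(b+c) ≤ 2bc, 1+cosA ≥ 2cos², sin ≤ 1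
  nlinarith [mul_pos hb0 hc0, sq_nonneg (cos (β / 2)), mul_nonneg (mul_nonneg hcb0 hM.le) hc0.le,
    mul_le_mul_of_nonneg_left hone (mul_nonneg (mul_nonneg hb0.le hc0.le) hc0.le),
    mul_le_mul_of_nonneg_left htri (mul_nonneg (mul_nonneg hcb0 hM.le) hc0.le),
    mul_le_mul_of_nonneg_right (mul_le_mul_of_nonneg_left hsin1 hcb0)
      (mul_nonneg (mul_nonneg hM.le hc0.le) (by linarith : (0:ℝ) ≤ a + b + c))]

/-- If `△uvw` and `△uvw'` share the edge `uv`, have disjoint interiors, all side lengths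
at least `M` and all angles between `α` and `β`, then every point of the segment joining
the two incentres is at distance at least `b·M` from `u` and from `v`, where
`b = cos²(β/2)·sin(α/2)/2`. -/
theorem stmt4 (α β M : ℝ) (hα : 0 < α) (hβ : β < π) (hαπ : α < π) (hβ0 : 0 < β)
    (hM : 0 < M) (u v w w' : EuclideanSpace ℝ (Fin 2))
    (hind : ¬ Collinear ℝ ({u, v, w} : Set (EuclideanSpace ℝ (Fin 2))))
    (hind' : ¬ Collinear ℝ ({u, v, w'} : Set (EuclideanSpace ℝ (Fin 2))))
    (hdisj : interior (convexHull ℝ ({u, v, w} : Set (EuclideanSpace ℝ (Fin 2)))) ∩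
        interior (convexHull ℝ ({u, v, w'} : Set (EuclideanSpace ℝ (Fin 2)))) = ∅)
    (hs₁ : M ≤ dist u v) (hs₂ : M ≤ dist u w) (hs₃ : M ≤ dist v w)
    (hs₂' : M ≤ dist u w') (hs₃' : M ≤ dist v w')
    (ha₁ : α ≤ angle v u w) (ha₁' : angle v u w ≤ β)
    (ha₂ : α ≤ angle u v w) (ha₂' : angle u v w ≤ β)
    (ha₃ : α ≤ angle u w v) (ha₃' : angle u w v ≤ β)
    (hb₁ : α ≤ angle v u w') (hb₁' : angle v u w' ≤ β)
    (hb₂ : α ≤ angle u v w') (hb₂' : angle u v w' ≤ β)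
    (hb₃ : α ≤ angle u w' v) (hb₃' : angle u w' v ≤ β) :
    ∀ p ∈ segment ℝ (incentre u v w) (incentre u v w'),
      (cos (β / 2) ^ 2 * sin (α / 2) / 2) * M ≤ dist u p ∧
      (cos (β / 2) ^ 2 * sin (α / 2) / 2) * M ≤ dist v p := by
  rintro p ⟨t₁, t₂, ht₁, ht₂, hsum, rfl⟩
  set T := cos (β / 2) ^ 2 * sin (α / 2) / 2 with hT
  have main : ∀ x y : EuclideanSpace ℝ (Fin 2),
      T * M * dist x y ≤ (inner ℝ (incentre u v w - x) (y - x) : ℝ) →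
      T * M * dist x y ≤ (inner ℝ (incentre u v w' - x) (y - x) : ℝ) →
      0 < dist x y →
      T * M ≤ dist x (t₁ • incentre u v w + t₂ • incentre u v w') := by
    intro x y hk hk' hd
    have hsub : t₁ • incentre u v w + t₂ • incentre u v w' - x
        = t₁ • (incentre u v w - x) + t₂ • (incentre u v w' - x) := by
      have h : t₁ • incentre u v w + t₂ • incentre u v w' - x
          = t₁ • (incentre u v w - x) + t₂ • (incentre u v w' - x)
            + (t₁ + t₂ - 1) • x := by
        match_scalars <;> ring
      rw [h, hsum]; simp
    have hinner : T * M * dist x y ≤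
        (inner ℝ (t₁ • incentre u v w + t₂ • incentre u v w' - x) (y - x) : ℝ) := by
      rw [hsub, inner_add_left, real_inner_smul_left, real_inner_smul_left]
      have e1 := mul_le_mul_of_nonneg_left hk ht₁
      have e2 := mul_le_mul_of_nonneg_left hk' ht₂
      have e3 : t₁ * (T * M * dist x y) + t₂ * (T * M * dist x y) = T * M * dist x y := by
        rw [← add_mul, hsum, one_mul]
      linarith
    have hCS := real_inner_le_norm
      (t₁ • incentre u v w + t₂ • incentre u v w' - x) (y - x)
    have hny : ‖y - x‖ = dist x y := by
      rw [dist_eq_norm, ← norm_neg]; congr 1; abel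
    have hnp : ‖t₁ • incentre u v w + t₂ • incentre u v w' - x‖
        = dist x (t₁ • incentre u v w + t₂ • incentre u v w') := by
      rw [dist_eq_norm, ← norm_neg]; congr 1; abel
    rw [hny, hnp] at hCS
    have : T * M * dist x y ≤ dist x (t₁ • incentre u v w + t₂ • incentre u v w') * dist x y :=
      le_trans hinner hCS
    exact le_of_mul_le_mul_right this hd
  constructor
  · exact main u v
      (key α β M u v w hα hαπ hβ hβ0 hM hs₁ hs₂ hs₃ ha₁')
      (key α β M u v w' hα hαπ hβ hβ0 hM hs₁ hs₂' hs₃' hb₁')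
      (lt_of_lt_of_le hM hs₁)
  · have hcvu : M ≤ dist v u := by rwa [dist_comm]
    exact main v u
      (by rw [incentre_comm u v w]; exact key α β M v u w hα hαπ hβ hβ0 hM hcvu hs₃ hs₂ ha₂')
      (by rw [incentre_comm u v w']; exact key α β M v u w' hα hαπ hβ hβ0 hM hcvu hs₃' hs₂' hb₂')
      (lt_of_lt_of_le hM hcvu)
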